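/- Let R > 0 and let f₋, f₊ : [0,R] → ℝ be continuous on [0,R], C² on (0,R), solve system (S) on (0,R), and satisfy f₋(0) = f₊(0) = 0, f₋(R) = 1, f₊(R) = 0. Then the potential energy bound 2 ∫₀^R W(f₋(r), f₊(r)) r dr ≤ 1 holds. -/

import Mathlib

open MeasureTheory

/-- The radial Laplacian `Δ_r u(r) = u''(r) + u'(r)/r`. -/
noncomputable def radLap (f : ℝ → ℝ) (r : ℝ) : ℝ := deriv (deriv f) r + deriv f r / r

/-- System (S): the equivariant isotropic p-wave Ginzburg–Landau system with degrees (-1, 1). -/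
def SystemS (fm fp : ℝ → ℝ) (r : ℝ) : Prop :=
  radLap fm r - fm r / r ^ 2 + (1 / 2) * (radLap fp r - fp r / r ^ 2)
      = fm r * (fm r ^ 2 - 1) + 2 * fm r * fp r ^ 2 ∧
  radLap fp r - fp r / r ^ 2 + (1 / 2) * (radLap fm r - fm r / r ^ 2)
      = fp r * (fp r ^ 2 - 1) + 2 * fp r * fm r ^ 2

/-- The normalized radial potential density `W(f₋,f₊) = ½(f₋²+f₊²−1)² + f₋²f₊²`. -/
noncomputable def Wpot (x y : ℝ) : ℝ := (1 / 2) * (x ^ 2 + y ^ 2 - 1) ^ 2 + x ^ 2 * y ^ 2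

/- Auxiliary quantities. -/
noncomputable def auxW (fm fp : ℝ → ℝ) (s : ℝ) : ℝ := Wpot (fm s) (fp s)
noncomputable def auxQ (fm fp : ℝ → ℝ) (s : ℝ) : ℝ := fm s ^ 2 + fp s ^ 2 + fm s * fp s
noncomputable def auxP (fm fp : ℝ → ℝ) (s : ℝ) : ℝ :=
  deriv fm s ^ 2 + deriv fp s ^ 2 + deriv fm s * deriv fp s
noncomputable def auxG (fm fp : ℝ → ℝ) (s : ℝ) : ℝ :=
  s ^ 2 * auxP fm fp s - auxQ fm fp s - s ^ 2 * auxW fm fp s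
noncomputable def auxQ' (fm fp : ℝ → ℝ) (s : ℝ) : ℝ :=
  2 * fm s * deriv fm s + 2 * fp s * deriv fp s + deriv fm s * fp s + fm s * deriv fp s
noncomputable def auxPhi (fm fp : ℝ → ℝ) (s : ℝ) : ℝ := s * auxQ' fm fp s
noncomputable def auxS (fm fp : ℝ → ℝ) (s : ℝ) : ℝ :=
  2 * ((fm s ^ 2 + fp s ^ 2) ^ 2 - (fm s ^ 2 + fp s ^ 2) + 2 * fm s ^ 2 * fp s ^ 2)

lemma Wpot_nonneg (x y : ℝ) : 0 ≤ Wpot x y := by unfold Wpot; positivity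

lemma auxQ_nonneg (fm fp : ℝ → ℝ) (s : ℝ) : 0 ≤ auxQ fm fp s := by
  unfold auxQ; nlinarith [sq_nonneg (fm s + fp s), sq_nonneg (fm s - fp s)]

lemma auxP_nonneg (fm fp : ℝ → ℝ) (s : ℝ) : 0 ≤ auxP fm fp s := by
  unfold auxP
  nlinarith [sq_nonneg (deriv fm s + deriv fp s), sq_nonneg (deriv fm s - deriv fp s)]

lemma auxS_lb (fm fp : ℝ → ℝ) (s : ℝ) : -(1/2 : ℝ) ≤ auxS fm fp s := by
  unfold auxS
  nlinarith [sq_nonneg (fm s ^ 2 + fp s ^ 2 - 1/2), sq_nonneg (fm s * fp s)]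

/-- Derivative of `Q`. -/
lemma hasDerivAt_auxQ (fm fp : ℝ → ℝ) (r : ℝ)
    (h1 : HasDerivAt fm (deriv fm r) r) (h3 : HasDerivAt fp (deriv fp r) r) :
    HasDerivAt (auxQ fm fp) (auxQ' fm fp r) r := by
  unfold auxQ auxQ'
  have a1 : HasDerivAt (fun s => fm s ^ 2) (2 * fm r * deriv fm r) r := by
    simpa [mul_comm] using h1.fun_pow 2
  have a2 : HasDerivAt (fun s => fp s ^ 2) (2 * fp r * deriv fp r) r := by
    simpa [mul_comm] using h3.fun_pow 2
  have := (a1.fun_add a2).fun_add (h1.fun_mul h3)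
  refine this.congr_deriv ?_
  ring

/-- Pohozaev: derivative of `G = r²P − Q − r²W` is `−2rW`. -/
lemma hasDerivAt_auxG (fm fp : ℝ → ℝ) (r : ℝ) (hr : 0 < r)
    (h1 : HasDerivAt fm (deriv fm r) r)
    (h2 : HasDerivAt (deriv fm) (deriv (deriv fm) r) r)
    (h3 : HasDerivAt fp (deriv fp r) r)
    (h4 : HasDerivAt (deriv fp) (deriv (deriv fp) r) r)
    (hsys : SystemS fm fp r) :
    HasDerivAt (auxG fm fp) (-(2 * r * auxW fm fp r)) r := by
  obtain ⟨e1, e2⟩ := hsys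
  simp only [radLap] at e1 e2
  have hr0 : r ≠ 0 := ne_of_gt hr
  have hd1 : deriv (deriv fm) r =
      (4*(fm r * (fm r ^ 2 - 1) + 2 * fm r * fp r ^ 2)
        - 2*(fp r * (fp r ^ 2 - 1) + 2 * fp r * fm r ^ 2))/3
        - deriv fm r / r + fm r / r^2 := by linarith
  have hd2 : deriv (deriv fp) r =
      (4*(fp r * (fp r ^ 2 - 1) + 2 * fp r * fm r ^ 2)
        - 2*(fm r * (fm r ^ 2 - 1) + 2 * fm r * fp r ^ 2))/3
        - deriv fp r / r + fp r / r^2 := by linarith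
  have hid : HasDerivAt (fun s : ℝ => s) 1 r := hasDerivAt_id r
  have hsq : HasDerivAt (fun s : ℝ => s^2) (2 * r) r := by
    simpa using hid.fun_pow 2
  have hm2 : HasDerivAt (fun s => fm s ^ 2) (2 * fm r * deriv fm r) r := by
    simpa [mul_comm] using h1.fun_pow 2
  have hp2 : HasDerivAt (fun s => fp s ^ 2) (2 * fp r * deriv fp r) r := by
    simpa [mul_comm] using h3.fun_pow 2
  have hW : HasDerivAt (fun s => Wpot (fm s) (fp s))
      ((1/2) * (2 * (fm r^2 + fp r^2 - 1) * (2 * fm r * deriv fm r + 2 * fp r * deriv fp r))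
        + ((2 * fm r * deriv fm r) * fp r^2 + fm r^2 * (2 * fp r * deriv fp r))) r := by
    simp only [Wpot]
    have hsum : HasDerivAt (fun s => fm s^2 + fp s^2 - 1)
        (2 * fm r * deriv fm r + 2 * fp r * deriv fp r) r := (hm2.add hp2).sub_const 1
    have hsq2 : HasDerivAt (fun s => (fm s^2 + fp s^2 - 1)^2)
        (2 * (fm r^2 + fp r^2 - 1) * (2 * fm r * deriv fm r + 2 * fp r * deriv fp r)) r := by
      simpa [mul_comm, mul_assoc] using hsum.fun_pow 2
    exact ((hsq2.const_mul (1/2 : ℝ)).add (hm2.mul hp2))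
  have hP : HasDerivAt (fun s => deriv fm s^2 + deriv fp s^2 + deriv fm s * deriv fp s)
      (2 * deriv fm r * deriv (deriv fm) r + 2 * deriv fp r * deriv (deriv fp) r
        + (deriv (deriv fm) r * deriv fp r + deriv fm r * deriv (deriv fp) r)) r := by
    have a1 : HasDerivAt (fun s => deriv fm s ^ 2) (2 * deriv fm r * deriv (deriv fm) r) r := by
      simpa [mul_comm] using h2.fun_pow 2
    have a2 : HasDerivAt (fun s => deriv fp s ^ 2) (2 * deriv fp r * deriv (deriv fp) r) r := by
      simpa [mul_comm] using h4.fun_pow 2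
    exact (a1.add a2).add (h2.mul h4)
  have hQ : HasDerivAt (fun s => fm s^2 + fp s^2 + fm s * fp s)
      (2 * fm r * deriv fm r + 2 * fp r * deriv fp r
        + (deriv fm r * fp r + fm r * deriv fp r)) r :=
    (hm2.add hp2).add (h1.mul h3)
  have h := ((hsq.fun_mul hP).fun_sub hQ).fun_sub (hsq.fun_mul hW)
  unfold auxG auxP auxQ auxW
  refine h.congr_deriv ?_
  simp only [Wpot]
  rw [hd1, hd2]
  field_simp
  ring

/-- Derivative of `φ = r·Q'` equals `2rP + 2Q/r + rS`. -/
lemma hasDerivAt_auxPhi (fm fp : ℝ → ℝ) (r : ℝ) (hr : 0 < r)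
    (h1 : HasDerivAt fm (deriv fm r) r)
    (h2 : HasDerivAt (deriv fm) (deriv (deriv fm) r) r)
    (h3 : HasDerivAt fp (deriv fp r) r)
    (h4 : HasDerivAt (deriv fp) (deriv (deriv fp) r) r)
    (hsys : SystemS fm fp r) :
    HasDerivAt (auxPhi fm fp)
      (2 * r * auxP fm fp r + 2 * auxQ fm fp r / r + r * auxS fm fp r) r := by
  obtain ⟨e1, e2⟩ := hsys
  simp only [radLap] at e1 e2
  have hr0 : r ≠ 0 := ne_of_gt hr
  have hd1 : deriv (deriv fm) r =
      (4*(fm r * (fm r ^ 2 - 1) + 2 * fm r * fp r ^ 2)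
        - 2*(fp r * (fp r ^ 2 - 1) + 2 * fp r * fm r ^ 2))/3
        - deriv fm r / r + fm r / r^2 := by linarith
  have hd2 : deriv (deriv fp) r =
      (4*(fp r * (fp r ^ 2 - 1) + 2 * fp r * fm r ^ 2)
        - 2*(fm r * (fm r ^ 2 - 1) + 2 * fm r * fp r ^ 2))/3
        - deriv fp r / r + fp r / r^2 := by linarith
  have hid : HasDerivAt (fun s : ℝ => s) 1 r := hasDerivAt_id r
  have hQ' : HasDerivAt (auxQ' fm fp)
      ((2 * deriv fm r * deriv fm r + 2 * fm r * deriv (deriv fm) r)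
        + (2 * deriv fp r * deriv fp r + 2 * fp r * deriv (deriv fp) r)
        + (deriv (deriv fm) r * fp r + deriv fm r * deriv fp r)
        + (deriv fm r * deriv fp r + fm r * deriv (deriv fp) r)) r := by
    unfold auxQ'
    have a1 : HasDerivAt (fun s => 2 * fm s * deriv fm s)
        (2 * deriv fm r * deriv fm r + 2 * fm r * deriv (deriv fm) r) r :=
      (h1.const_mul (2:ℝ)).mul h2
    have a2 : HasDerivAt (fun s => 2 * fp s * deriv fp s)
        (2 * deriv fp r * deriv fp r + 2 * fp r * deriv (deriv fp) r) r :=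
      (h3.const_mul (2:ℝ)).mul h4
    exact ((a1.add a2).add (h2.mul h3)).add (h1.mul h4)
  have h := hid.fun_mul hQ'
  unfold auxPhi
  refine h.congr_deriv ?_
  unfold auxP auxQ auxS auxQ'
  rw [hd1, hd2]
  field_simp
  ring

set_option maxHeartbeats 1000000 in
theorem stmt5 (R : ℝ) (hR : 0 < R) (fm fp : ℝ → ℝ)
    (hcm : ContinuousOn fm (Set.Icc 0 R)) (hcp : ContinuousOn fp (Set.Icc 0 R))
    (hfm : ContDiffOn ℝ 2 fm (Set.Ioo 0 R)) (hfp : ContDiffOn ℝ 2 fp (Set.Ioo 0 R))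
    (hS : ∀ r ∈ Set.Ioo 0 R, SystemS fm fp r)
    (h0m : fm 0 = 0) (h0p : fp 0 = 0) (hRm : fm R = 1) (hRp : fp R = 0) :
    2 * ∫⁻ r in Set.Ioo 0 R, ENNReal.ofReal (Wpot (fm r) (fp r) * r) ≤ 1 := by
  have hO : IsOpen (Set.Ioo (0:ℝ) R) := isOpen_Ioo
  -- pointwise derivative facts on (0,R)
  have hder : ∀ f : ℝ → ℝ, ContDiffOn ℝ 2 f (Set.Ioo 0 R) → ∀ r ∈ Set.Ioo (0:ℝ) R,
      HasDerivAt f (deriv f r) r ∧ HasDerivAt (deriv f) (deriv (deriv f) r) r := by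
    intro f hf r hr
    have hd1 : ContDiffOn ℝ 1 (deriv f) (Set.Ioo 0 R) :=
      hf.deriv_of_isOpen hO (by norm_num)
    constructor
    · exact ((hf.differentiableOn (by norm_num)).differentiableAt
        (hO.mem_nhds hr)).hasDerivAt
    · exact ((hd1.differentiableOn (by norm_num)).differentiableAt
        (hO.mem_nhds hr)).hasDerivAt
  have hm := hder fm hfm
  have hp := hder fp hfp
  -- continuity of W∘f and Q on [0,R]
  have hWfc : ContinuousOn (auxW fm fp) (Set.Icc 0 R) := by
    unfold auxW Wpot
    exact (((((hcm.pow 2).add (hcp.pow 2)).sub continuousOn_const).pow 2).const_smul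
      (1/2:ℝ)).add ((hcm.pow 2).mul (hcp.pow 2))
  have hQc : ContinuousOn (auxQ fm fp) (Set.Icc 0 R) := by
    unfold auxQ
    exact ((hcm.pow 2).add (hcp.pow 2)).add (hcm.mul hcp)
  -- global bound M
  obtain ⟨M, hM0, hMW, hMQ⟩ : ∃ M : ℝ, 0 < M ∧ (∀ s ∈ Set.Icc (0:ℝ) R, auxW fm fp s * s ≤ M)
      ∧ (∀ s ∈ Set.Icc (0:ℝ) R, auxQ fm fp s ≤ M) := by
    obtain ⟨M1, hM1⟩ := isCompact_Icc.exists_bound_of_continuousOn hWfc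
    obtain ⟨M2, hM2⟩ := isCompact_Icc.exists_bound_of_continuousOn hQc
    refine ⟨|M1| * R + |M2| + 1, by positivity, ?_, ?_⟩
    · intro s hs
      have h1 : auxW fm fp s ≤ |M1| := le_trans (le_abs_self _)
        (le_trans (hM1 s hs) (le_abs_self _))
      have h2 : auxW fm fp s * s ≤ |M1| * R :=
        mul_le_mul h1 hs.2 hs.1 (abs_nonneg _)
      have h3 : (0:ℝ) ≤ |M2| := abs_nonneg _
      linarith
    · intro s hs
      have h1 : auxQ fm fp s ≤ |M2| := le_trans (le_abs_self _)
        (le_trans (hM2 s hs) (le_abs_self _))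
      have h3 : (0:ℝ) ≤ |M1| * R := by positivity
      linarith
  -- FTC / Pohozaev
  have hG' : ∀ r ∈ Set.Ioo (0:ℝ) R, HasDerivAt (auxG fm fp) (-(2 * r * auxW fm fp r)) r :=
    fun r hr => hasDerivAt_auxG fm fp r hr.1 (hm r hr).1 (hm r hr).2 (hp r hr).1 (hp r hr).2
      (hS r hr)
  have hFTC : ∀ a b : ℝ, 0 < a → a ≤ b → b < R →
      ∫ r in a..b, auxW fm fp r * r = (auxG fm fp a - auxG fm fp b)/2 := by
    intro a b ha hab hbR
    have hsub : Set.uIcc a b ⊆ Set.Ioo 0 R := by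
      rw [Set.uIcc_of_le hab]
      intro x hx
      exact ⟨lt_of_lt_of_le ha hx.1, lt_of_le_of_lt hx.2 hbR⟩
    have hsub2 : Set.uIcc a b ⊆ Set.Icc 0 R := hsub.trans Set.Ioo_subset_Icc_self
    have hci : IntervalIntegrable (fun x => -(2 * x * auxW fm fp x)) volume a b := by
      apply ContinuousOn.intervalIntegrable
      exact (((continuousOn_const.mul continuousOn_id).mul (hWfc.mono hsub2))).neg
    have hft := intervalIntegral.integral_eq_sub_of_hasDerivAt
      (fun x hx => hG' x (hsub hx)) hci
    have hcong : ∫ r in a..b, auxW fm fp r * r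
        = ∫ r in a..b, (-(1/2:ℝ)) * (-(2 * r * auxW fm fp r)) := by
      apply intervalIntegral.integral_congr
      intro x _; ring
    rw [hcong, intervalIntegral.integral_const_mul, hft]
    ring
  -- key smallness of G near 0
  have hKey : ∀ η : ℝ, 0 < η → ∀ δ : ℝ, 0 < δ → δ ≤ R →
      ∃ a : ℝ, 0 < a ∧ a < δ ∧ auxG fm fp a ≤ η := by
    intro η hη δ hδ hδR
    by_contra hcon
    push_neg at hcon
    -- so G a > η for all a ∈ (0, δ); hence r²P > η there
    have hPl : ∀ a : ℝ, 0 < a → a < δ → η < a^2 * auxP fm fp a := by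
      intro a ha haδ
      have h := hcon a ha haδ
      have h1 : 0 ≤ auxQ fm fp a := auxQ_nonneg fm fp a
      have h2 : 0 ≤ a^2 * auxW fm fp a := by
        have h3 : 0 ≤ auxW fm fp a := Wpot_nonneg (fm a) (fp a)
        positivity
      unfold auxG at h
      linarith
    have hmemI : ∀ r : ℝ, 0 < r → r < δ → r ∈ Set.Ioo (0:ℝ) R :=
      fun r h1 h2 => ⟨h1, lt_of_lt_of_le h2 hδR⟩
    have hφ' : ∀ r : ℝ, 0 < r → r < δ → HasDerivAt (auxPhi fm fp)
        (2 * r * auxP fm fp r + 2 * auxQ fm fp r / r + r * auxS fm fp r) r := by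
      intro r h1 h2
      have hr := hmemI r h1 h2
      exact hasDerivAt_auxPhi fm fp r h1 (hm r hr).1 (hm r hr).2 (hp r hr).1 (hp r hr).2
        (hS r hr)
    obtain ⟨t0, ht00, ht0δ⟩ : ∃ t0 : ℝ, 0 < t0 ∧ t0 < δ := ⟨δ/2, by positivity, by linarith⟩
    -- ψ = φ − 2η log + s²/4 is monotone on (0, δ)
    set ψ : ℝ → ℝ := fun s => auxPhi fm fp s - 2*η*Real.log s + s^2/4 with hψdef
    have hψd : ∀ r : ℝ, 0 < r → r < δ →
        HasDerivAt ψ ((2 * r * auxP fm fp r + 2 * auxQ fm fp r / r + r * auxS fm fp r)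
          - 2*η*r⁻¹ + (2*r)/4) r := by
      intro r h1 h2
      have hlog : HasDerivAt (fun s => 2*η*Real.log s) (2*η*r⁻¹) r :=
        (Real.hasDerivAt_log (ne_of_gt h1)).const_mul (2*η)
      have hq : HasDerivAt (fun s : ℝ => s^2/4) ((2*r)/4) r := by
        have h3 := (hasDerivAt_id r).pow 2
        simpa using h3.div_const 4
      exact ((hφ' r h1 h2).sub hlog).add hq
    have hψd0 : ∀ r : ℝ, 0 < r → r < δ →
        0 ≤ (2 * r * auxP fm fp r + 2 * auxQ fm fp r / r + r * auxS fm fp r)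
          - 2*η*r⁻¹ + (2*r)/4 := by
      intro r h1 h2
      have hp1 : η < r^2 * auxP fm fp r := hPl r h1 h2
      have hQn : 0 ≤ auxQ fm fp r := auxQ_nonneg fm fp r
      have hSl : -(1/2:ℝ) ≤ auxS fm fp r := auxS_lb fm fp r
      have e1 : 2*η*r⁻¹ ≤ 2 * r * auxP fm fp r := by
        rw [mul_inv_le_iff₀ h1]
        nlinarith
      have e2 : 0 ≤ 2 * auxQ fm fp r / r := by positivity
      have e3 : 0 ≤ r * auxS fm fp r + (2*r)/4 := by nlinarith
      linarith
    have hψmono : ∀ s : ℝ, 0 < s → s ≤ t0 → ψ s ≤ ψ t0 := by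
      intro s hs hst
      have hsub : Set.Icc s t0 ⊆ {x : ℝ | 0 < x ∧ x < δ} := by
        intro x hx
        exact ⟨lt_of_lt_of_le hs hx.1, lt_of_le_of_lt hx.2 ht0δ⟩
      have hC : ContinuousOn ψ (Set.Icc s t0) := by
        intro x hx
        exact ((hψd x (hsub hx).1 (hsub hx).2).continuousAt).continuousWithinAt
      have hD : DifferentiableOn ℝ ψ (interior (Set.Icc s t0)) := by
        intro x hx
        rw [interior_Icc] at hx
        have hx' := hsub (Set.Ioo_subset_Icc_self hx)
        exact ((hψd x hx'.1 hx'.2).differentiableAt).differentiableWithinAt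
      have hd0 : ∀ x ∈ interior (Set.Icc s t0), 0 ≤ deriv ψ x := by
        intro x hx
        rw [interior_Icc] at hx
        have hx' := hsub (Set.Ioo_subset_Icc_self hx)
        rw [(hψd x hx'.1 hx'.2).deriv]
        exact hψd0 x hx'.1 hx'.2
      exact monotoneOn_of_deriv_nonneg (convex_Icc s t0) hC hD hd0
        ⟨le_rfl, hst⟩ ⟨hst, le_rfl⟩ hst
    obtain ⟨C0, hC0⟩ : ∃ C0 : ℝ,
        C0 = auxPhi fm fp t0 - 2*η*Real.log t0 + t0^2/4 := ⟨_, rfl⟩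
    have hφub : ∀ s : ℝ, 0 < s → s ≤ t0 → auxPhi fm fp s ≤ 2*η*Real.log s + C0 := by
      intro s hs hst
      have h := hψmono s hs hst
      simp only [hψdef] at h
      have hsq : 0 ≤ s^2/4 := by positivity
      rw [hC0]
      linarith
    -- χ = Q − C0 log − η log² is antitone on (0, t0]
    set χ : ℝ → ℝ := fun s => auxQ fm fp s - C0*Real.log s - η*(Real.log s)^2 with hχdef
    have hχd : ∀ r : ℝ, 0 < r → r ≤ t0 →
        HasDerivAt χ ((auxPhi fm fp r - C0 - 2*η*Real.log r)/r) r := by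
      intro r h1 h2
      have hrI := hmemI r h1 (lt_of_le_of_lt h2 ht0δ)
      have hq : HasDerivAt (auxQ fm fp) (auxQ' fm fp r) r :=
        hasDerivAt_auxQ fm fp r (hm r hrI).1 (hp r hrI).1
      have hlog : HasDerivAt (fun s => C0*Real.log s) (C0*r⁻¹) r :=
        (Real.hasDerivAt_log (ne_of_gt h1)).const_mul C0
      have hlog2 : HasDerivAt (fun s => η*(Real.log s)^2) (η*(2*Real.log r*r⁻¹)) r := by
        have h := (Real.hasDerivAt_log (ne_of_gt h1)).fun_pow 2
        have h' : HasDerivAt (fun s => (Real.log s)^2) (2*Real.log r*r⁻¹) r := by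
          simpa using h
        exact h'.const_mul η
      have h := (hq.fun_sub hlog).fun_sub hlog2
      refine h.congr_deriv ?_
      have hr0 : r ≠ 0 := ne_of_gt h1
      have hphi : auxPhi fm fp r = r * auxQ' fm fp r := rfl
      rw [hphi]
      field_simp [hphi]
    have hχanti : ∀ s : ℝ, 0 < s → s ≤ t0 → χ t0 ≤ χ s := by
      intro s hs hst
      have hsub : Set.Icc s t0 ⊆ {x : ℝ | 0 < x ∧ x ≤ t0} := by
        intro x hx
        exact ⟨lt_of_lt_of_le hs hx.1, hx.2⟩
      have hC : ContinuousOn χ (Set.Icc s t0) := by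
        intro x hx
        exact ((hχd x (hsub hx).1 (hsub hx).2).continuousAt).continuousWithinAt
      have hD : DifferentiableOn ℝ χ (interior (Set.Icc s t0)) := by
        intro x hx
        rw [interior_Icc] at hx
        have hx' := hsub (Set.Ioo_subset_Icc_self hx)
        exact ((hχd x hx'.1 hx'.2).differentiableAt).differentiableWithinAt
      have hd0 : ∀ x ∈ interior (Set.Icc s t0), deriv χ x ≤ 0 := by
        intro x hx
        rw [interior_Icc] at hx
        have hx' := hsub (Set.Ioo_subset_Icc_self hx)
        rw [(hχd x hx'.1 hx'.2).deriv]
        apply div_nonpos_of_nonpos_of_nonneg _ hx'.1.le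
        have h := hφub x hx'.1 hx'.2
        linarith
      exact antitoneOn_of_deriv_nonpos (convex_Icc s t0) hC hD hd0
        ⟨le_rfl, hst⟩ ⟨hst, le_rfl⟩ hst
    obtain ⟨X0, hX0⟩ : ∃ X0 : ℝ,
        X0 = auxQ fm fp t0 - C0*Real.log t0 - η*(Real.log t0)^2 := ⟨_, rfl⟩
    have hQlb : ∀ s : ℝ, 0 < s → s ≤ t0 →
        X0 ≤ auxQ fm fp s - C0*Real.log s - η*(Real.log s)^2 := by
      intro s hs hst
      have h := hχanti s hs hst
      simp only [hχdef] at h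
      rw [hX0]
      exact h
    -- blow-up of Q near 0: contradiction
    have hT : Filter.Tendsto (fun s : ℝ => C0*Real.log s + η*(Real.log s)^2)
        (nhdsWithin 0 (Set.Ioi 0)) Filter.atTop := by
      have hid : Filter.Tendsto (fun u : ℝ => u) Filter.atBot Filter.atBot :=
        Filter.tendsto_id
      have h1 : Filter.Tendsto (fun u : ℝ => u * (C0 + η*u)) Filter.atBot Filter.atTop := by
        apply Filter.Tendsto.atBot_mul_atBot₀ hid
        exact Filter.tendsto_atBot_add_const_left _ C0 (hid.const_mul_atBot hη)
      have h2 := h1.comp Real.tendsto_log_nhdsGT_zero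
      apply h2.congr
      intro s
      simp only [Function.comp_apply]
      ring
    have hev1 : ∀ᶠ s in nhdsWithin (0:ℝ) (Set.Ioi 0),
        M - X0 + 1 ≤ C0*Real.log s + η*(Real.log s)^2 :=
      hT.eventually_ge_atTop _
    have hev2 : ∀ᶠ s in nhdsWithin (0:ℝ) (Set.Ioi 0), s ∈ Set.Ioo (0:ℝ) (min t0 R) :=
      Ioo_mem_nhdsGT_of_mem ⟨le_rfl, lt_min ht00 hR⟩
    obtain ⟨s, hs1, hs2⟩ := (hev1.and hev2).exists
    have hs0 : 0 < s := hs2.1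
    have hst0 : s ≤ t0 := le_of_lt (lt_of_lt_of_le hs2.2 (min_le_left _ _))
    have hsR : s ≤ R := le_of_lt (lt_of_lt_of_le hs2.2 (min_le_right _ _))
    have hQub : auxQ fm fp s ≤ M := hMQ s ⟨hs0.le, hsR⟩
    have h := hQlb s hs0 hst0
    linarith
  -- integrability and conversion of the lintegral
  have hWrc : ContinuousOn (fun s => auxW fm fp s * s) (Set.Icc 0 R) :=
    hWfc.mul continuousOn_id
  have hIntIcc : IntegrableOn (fun s => auxW fm fp s * s) (Set.Icc 0 R) volume :=
    hWrc.integrableOn_Icc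
  have hInt : IntegrableOn (fun s => auxW fm fp s * s) (Set.Ioo 0 R) volume :=
    hIntIcc.mono_set Set.Ioo_subset_Icc_self
  have hnn_ae : 0 ≤ᵐ[volume.restrict (Set.Ioo 0 R)] fun s => auxW fm fp s * s := by
    filter_upwards [ae_restrict_mem measurableSet_Ioo] with x hx
    exact mul_nonneg (Wpot_nonneg (fm x) (fp x)) hx.1.le
  have hlint : ∫⁻ r in Set.Ioo 0 R, ENNReal.ofReal (Wpot (fm r) (fp r) * r)
      = ENNReal.ofReal (∫ r in Set.Ioo 0 R, auxW fm fp r * r) :=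
    (ofReal_integral_eq_lintegral_ofReal hInt hnn_ae).symm
  rw [hlint]
  -- main real bound : ∫ ≤ 1/2
  have hK : (∫ r in Set.Ioo 0 R, auxW fm fp r * r) ≤ 1/2 := by
    by_contra hc
    push_neg at hc
    obtain ⟨K, hKdef⟩ : ∃ K : ℝ, K = ∫ r in Set.Ioo 0 R, auxW fm fp r * r := ⟨_, rfl⟩
    rw [← hKdef] at hc
    obtain ⟨ε, hε0, hεlt⟩ : ∃ ε : ℝ, 0 < ε ∧ 1/2 + 3*ε < K :=
      ⟨(K - 1/2)/4, by linarith, by linarith⟩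
    -- choose b near R
    have hQR : Filter.Tendsto (fun b => auxQ fm fp b + b^2 * auxW fm fp b)
        (nhdsWithin R (Set.Ioo 0 R)) (nhds 1) := by
      have hcont : ContinuousOn (fun b => auxQ fm fp b + b^2 * auxW fm fp b)
          (Set.Icc 0 R) := hQc.add (((continuousOn_id.pow 2)).mul hWfc)
      have hRmem : R ∈ Set.Icc (0:ℝ) R := ⟨hR.le, le_rfl⟩
      have h1 := (hcont R hRmem).tendsto
      have hval : auxQ fm fp R + R^2 * auxW fm fp R = 1 := by
        simp [auxQ, auxW, Wpot, hRm, hRp]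
      rw [hval] at h1
      exact h1.mono_left (nhdsWithin_mono _ Set.Ioo_subset_Icc_self)
    haveI hNB : (nhdsWithin R (Set.Ioo (0:ℝ) R)).NeBot := by
      rw [nhdsWithin_Ioo_eq_nhdsLT hR]
      infer_instance
    have hev1 : ∀ᶠ b in nhdsWithin R (Set.Ioo 0 R),
        auxQ fm fp b + b^2 * auxW fm fp b ≤ 1 + ε :=
      hQR.eventually_le_const (by linarith)
    have hev2 : ∀ᶠ b in nhdsWithin R (Set.Ioo 0 R), M * (R - b) ≤ ε := by
      have h1 : Filter.Tendsto (fun b : ℝ => M * (R - b))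
          (nhdsWithin R (Set.Ioo 0 R)) (nhds 0) := by
        have h2 : Continuous (fun b : ℝ => M * (R - b)) := by continuity
        have h3 : Filter.Tendsto (fun b : ℝ => M * (R - b))
            (nhdsWithin R (Set.Ioo 0 R)) (nhds (M * (R - R))) :=
          (h2.tendsto R).mono_left nhdsWithin_le_nhds
        simpa using h3
      exact h1.eventually_le_const hε0
    have hev3 : ∀ᶠ b in nhdsWithin R (Set.Ioo (0:ℝ) R), b ∈ Set.Ioo (0:ℝ) R :=
      self_mem_nhdsWithin
    obtain ⟨b, hb1, hb2, hb3⟩ := (hev1.and (hev2.and hev3)).exists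
    -- choose a small
    obtain ⟨a, ha0, haδ, haG⟩ := hKey ε hε0 (min b (ε/M)) (lt_min hb3.1 (by positivity))
      (le_trans (min_le_left _ _) hb3.2.le)
    have hab : a < b := lt_of_lt_of_le haδ (min_le_left _ _)
    have haε : M * a ≤ ε := by
      have h1 : a ≤ ε/M := (lt_of_lt_of_le haδ (min_le_right _ _)).le
      have h2 : M * a ≤ M * (ε/M) := mul_le_mul_of_nonneg_left h1 hM0.le
      rwa [show M * (ε/M) = ε from by field_simp] at h2
    -- split the integral
    have hsub1 : Set.Ioo (0:ℝ) a ⊆ Set.Icc 0 R := fun x hx =>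
      ⟨hx.1.le, hx.2.le.trans (hab.le.trans hb3.2.le)⟩
    have hsub2 : Set.Icc a b ⊆ Set.Icc (0:ℝ) R := fun x hx =>
      ⟨ha0.le.trans hx.1, hx.2.trans hb3.2.le⟩
    have hsub3 : Set.Ioo b R ⊆ Set.Icc (0:ℝ) R := fun x hx =>
      ⟨(hb3.1.trans hx.1).le, hx.2.le⟩
    have hdisj1 : Disjoint (Set.Ioc (0:ℝ) b) (Set.Ioo b R) :=
      Set.disjoint_left.mpr (fun x hx1 hx2 => absurd hx1.2 (not_le.mpr hx2.1))
    have hdisj2 : Disjoint (Set.Ioo (0:ℝ) a) (Set.Icc a b) :=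
      Set.disjoint_left.mpr (fun x hx1 hx2 => absurd hx2.1 (not_le.mpr hx1.2))
    have hsplit1 : Set.Ioo (0:ℝ) R = Set.Ioc 0 b ∪ Set.Ioo b R :=
      (Set.Ioc_union_Ioo_eq_Ioo hb3.1.le hb3.2).symm
    have hsplit2 : Set.Ioc (0:ℝ) b = Set.Ioo 0 a ∪ Set.Icc a b :=
      (Set.Ioo_union_Icc_eq_Ioc ha0 hab.le).symm
    have hint1 : IntegrableOn (fun s => auxW fm fp s * s) (Set.Ioo 0 a) volume :=
      hIntIcc.mono_set hsub1
    have hint2 : IntegrableOn (fun s => auxW fm fp s * s) (Set.Icc a b) volume :=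
      hIntIcc.mono_set hsub2
    have hint3 : IntegrableOn (fun s => auxW fm fp s * s) (Set.Ioo b R) volume :=
      hIntIcc.mono_set hsub3
    have hint4 : IntegrableOn (fun s => auxW fm fp s * s) (Set.Ioc 0 b) volume :=
      hIntIcc.mono_set (fun x hx => ⟨hx.1.le, hx.2.trans hb3.2.le⟩)
    have e0 : K = (∫ x in Set.Ioc (0:ℝ) b, auxW fm fp x * x)
        + ∫ x in Set.Ioo b R, auxW fm fp x * x := by
      rw [hKdef, hsplit1]
      exact setIntegral_union hdisj1 measurableSet_Ioo hint4 hint3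
    have e1 : (∫ x in Set.Ioc (0:ℝ) b, auxW fm fp x * x)
        = (∫ x in Set.Ioo (0:ℝ) a, auxW fm fp x * x)
          + ∫ x in Set.Icc a b, auxW fm fp x * x := by
      rw [hsplit2]
      exact setIntegral_union hdisj2 measurableSet_Icc hint1 hint2
    -- bounds on the three pieces
    have hnorm : ∀ (c d : ℝ), 0 ≤ c → c ≤ d → Set.Ioo c d ⊆ Set.Icc 0 R →
        (∫ x in Set.Ioo c d, auxW fm fp x * x) ≤ M * (d - c) := by
      intro c d hc hcd hsub
      have hb : ‖∫ x in Set.Ioo c d, auxW fm fp x * x‖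
          ≤ M * (volume (Set.Ioo c d)).toReal := by
        apply norm_setIntegral_le_of_norm_le_const
        · rw [Real.volume_Ioo]; exact ENNReal.ofReal_lt_top
        · intro x hx
          have h0 : (0:ℝ) ≤ auxW fm fp x * x :=
            mul_nonneg (Wpot_nonneg (fm x) (fp x)) (hc.trans hx.1.le)
          rw [Real.norm_of_nonneg h0]
          exact hMW x (hsub hx)
      rw [Real.volume_Ioo, ENNReal.toReal_ofReal (by linarith : (0:ℝ) ≤ d - c)] at hb
      exact le_trans (le_abs_self _) hb
    have bd1 : (∫ x in Set.Ioo (0:ℝ) a, auxW fm fp x * x) ≤ ε := by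
      have h := hnorm 0 a le_rfl ha0.le hsub1
      simpa using h.trans (by linarith : M * (a - 0) ≤ ε)
    have bd3 : (∫ x in Set.Ioo b R, auxW fm fp x * x) ≤ ε := by
      have h := hnorm b R hb3.1.le hb3.2.le hsub3
      exact h.trans (by linarith : M * (R - b) ≤ ε)
    have bd2 : (∫ x in Set.Icc a b, auxW fm fp x * x) ≤ 1/2 + ε := by
      rw [MeasureTheory.integral_Icc_eq_integral_Ioc,
        ← intervalIntegral.integral_of_le hab.le, hFTC a b ha0 hab.le hb3.2]
      have hGb : -(1+ε) ≤ auxG fm fp b := by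
        have h1 : 0 ≤ b^2 * auxP fm fp b :=
          mul_nonneg (by positivity) (auxP_nonneg fm fp b)
        unfold auxG
        linarith
      linarith
    linarith [e0, e1, bd1, bd2, bd3, hεlt]
  have h2e : (2:ENNReal) * ENNReal.ofReal (1/2) = 1 := by
    rw [show (2:ENNReal) = ENNReal.ofReal 2 by norm_num,
      ← ENNReal.ofReal_mul (by norm_num)]
    norm_num
  exact le_trans (mul_le_mul_right (ENNReal.ofReal_le_ofReal hK) 2) (le_of_eq h2e)
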